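/- Let g₁ = !![a₁,b₁;c₁,d₁] and g₂ = !![a₂,b₂;c₂,d₂] be 2×2 complex matrices with det g₂ ≠ 0, and let z₁, z₂ ∈ ℂ with c₁z₁ + d₁ ≠ 0 and c₂z₂ + d₂ ≠ 0. Then g₁ · w(z₁,z₂) · g₂⁻¹ = (((c₁z₁+d₁)(c₂z₂+d₂))/det g₂) · w((a₁z₁+b₁)/(c₁z₁+d₁), (a₂z₂+b₂)/(c₂z₂+d₂)). In particular, for pairs with det g₁ = det g₂ = ν this gives the automorphy factor j(g₁,g₂,z₁,z₂) = (c₁z₁+d₁)(c₂z₂+d₂). -/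

import Mathlib

/-- The matrix `w(z₁,z₂) = !![z₁, -z₁z₂; 1, -z₂]` of the paper (its `w_N`). -/
def wMat (z₁ z₂ : ℂ) : Matrix (Fin 2) (Fin 2) ℂ := !![z₁, -(z₁ * z₂); 1, -z₂]

/-- **Paper, Proposition 3.1, equation (3.1).** For `g₁ = !![a₁,b₁;c₁,d₁]`,
`g₂ = !![a₂,b₂;c₂,d₂]` with `det g₂ ≠ 0`, `c₁z₁+d₁ ≠ 0`, `c₂z₂+d₂ ≠ 0`, one has
`g₁ · w(z₁,z₂) · g₂⁻¹ = ((c₁z₁+d₁)(c₂z₂+d₂)/det g₂) · w(g₁z₁, g₂z₂)`, where `gᵢzᵢ`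
denotes the Möbius transform; this exhibits the automorphy factor
`j(g₁,g₂,z₁,z₂) = (c₁z₁+d₁)(c₂z₂+d₂)`. -/
theorem stmt3 (a₁ b₁ c₁ d₁ a₂ b₂ c₂ d₂ z₁ z₂ : ℂ)
    (hdet : (!![a₂, b₂; c₂, d₂] : Matrix (Fin 2) (Fin 2) ℂ).det ≠ 0)
    (h₁ : c₁ * z₁ + d₁ ≠ 0) (h₂ : c₂ * z₂ + d₂ ≠ 0) :
    !![a₁, b₁; c₁, d₁] * wMat z₁ z₂ * (!![a₂, b₂; c₂, d₂] : Matrix (Fin 2) (Fin 2) ℂ)⁻¹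
      = (((c₁ * z₁ + d₁) * (c₂ * z₂ + d₂))
            / (!![a₂, b₂; c₂, d₂] : Matrix (Fin 2) (Fin 2) ℂ).det) •
          wMat ((a₁ * z₁ + b₁) / (c₁ * z₁ + d₁)) ((a₂ * z₂ + b₂) / (c₂ * z₂ + d₂)) := by
  rw [Matrix.inv_def, Matrix.adjugate_fin_two]
  simp only [Matrix.det_fin_two_of] at hdet ⊢
  have h₁' : z₁ * c₁ + d₁ ≠ 0 := by rwa [mul_comm]
  have h₂' : z₂ * c₂ + d₂ ≠ 0 := by rwa [mul_comm]
  ext i j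
  fin_cases i <;> fin_cases j <;>
    simp [wMat, Matrix.mul_apply, Fin.sum_univ_succ, Matrix.smul_apply, Ring.inverse_eq_inv'] <;>
    field_simp <;> ring
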